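/- arXiv:0901.3866 — 5 statements merged into one kernel-verified Lean document; each statement's English description precedes it below -/
import Mathlib

section
/- Let Λ be an infinite countable group, let Υ₁, …, Υ_m (m ≥ 2) be infinite abelian groups, and for each i let σ^i : Λ → Aut(Υ_i) be an action with trivial stabilizers. Let Υ = Υ₁ ∗ ⋯ ∗ Υ_m be the free product, let σ : Λ → Aut(Υ) be the diagonal action, and let Γ = Υ ⋊_σ Λ be the semidirect product. Then Γ is ICC: for every g ∈ Γ with g ≠ 1, the conjugacy class {x g x⁻¹ : x ∈ Γ} is infinite. -/
open Monoid.CoprodI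

/-- Diagonal action on a free product has trivial stabilizers. -/
private theorem tau_trivial_stab
    {m : ℕ} {Λ : Type*} [Group Λ]
    {Υ : Fin m → Type*} [∀ i, CommGroup (Υ i)]
    (σ : ∀ i, Λ →* MulAut (Υ i))
    (hσ : ∀ i, ∀ h : Υ i, h ≠ 1 → ∀ g : Λ, σ i g h = h → g = 1)
    (τ : Λ →* MulAut (Monoid.CoprodI Υ))
    (hτ : ∀ (g : Λ) (i : Fin m) (h : Υ i),
      τ g (Monoid.CoprodI.of h) = Monoid.CoprodI.of (σ i g h))
    (k : Λ) (w : Monoid.CoprodI Υ) (hw : w ≠ 1) (hfix : τ k w = w) : k = 1 := by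
  classical
  set W : Word Υ := Word.equiv w with hW
  have hprod : Word.prod W = w := (Word.equiv (M := Υ)).symm_apply_apply w
  -- the mapped word
  have hmapmem : ∀ l ∈ W.toList.map (fun l : (Σ i, Υ i) => (⟨l.1, σ l.1 k l.2⟩ : Σ i, Υ i)),
      l.2 ≠ (1 : Υ l.1) := by
    intro l hl
    rcases List.mem_map.1 hl with ⟨l', hl', rfl⟩
    exact fun h => W.ne_one l' hl' ((MulEquiv.map_eq_one_iff (σ l'.1 k)).1 h)
  let W' : Word Υ :=
    { toList := W.toList.map (fun l : (Σ i, Υ i) => (⟨l.1, σ l.1 k l.2⟩ : Σ i, Υ i))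
      ne_one := hmapmem
      chain_ne := by
        rw [List.isChain_map]
        exact W.chain_ne }
  have hprod' : Word.prod W' = τ k w := by
    rw [← hprod]
    show (List.prod _) = τ k (List.prod _)
    rw [map_list_prod, List.map_map, List.map_map]
    congr 1
    apply List.map_congr_left
    intro l _
    exact (hτ k l.1 l.2).symm
  have hWeq : W' = W := by
    have : Word.prod W' = Word.prod W := by rw [hprod', hfix, hprod]
    exact (Word.equiv (M := Υ)).symm.injective this
  -- W is nonempty
  obtain ⟨l, L, hL⟩ : ∃ l L, W.toList = l :: L := by
    rcases h : W.toList with _ | ⟨l, L⟩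
    · exfalso
      apply hw
      rw [← hprod]
      show (List.prod _) = 1
      rw [h]; simp
    · exact ⟨l, L, rfl⟩
  have hlist : W'.toList = W.toList := by rw [hWeq]
  rw [hL] at hlist
  simp only [W', hL, List.map_cons, List.cons.injEq] at hlist
  have hfixl : σ l.1 k l.2 = l.2 := by
    obtain ⟨i, a⟩ := l
    have := hlist.1
    rw [Sigma.ext_iff] at this
    exact eq_of_heq this.2
  exact hσ l.1 l.2 (W.ne_one l (hL ▸ (List.mem_cons_self : l ∈ l :: L))) k hfixl

/-- Let `Λ` be an infinite countable group, `Υ₁, …, Υ_m` (`m ≥ 2`) infinite abelian groups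
with actions `σ i : Λ →* MulAut (Υ i)` having trivial stabilizers. Let `τ` denote the
diagonal action of `Λ` on the free product `Monoid.CoprodI Υ` (characterized on the
canonical generators). Then the semidirect product `Γ = CoprodI Υ ⋊[τ] Λ` is ICC. -/
theorem semidirect_product_coprodI_icc
    (m : ℕ) (hm : 2 ≤ m) (Λ : Type*) [Group Λ] [Infinite Λ] [Countable Λ]
    (Υ : Fin m → Type*) [∀ i, CommGroup (Υ i)] [∀ i, Infinite (Υ i)]
    (σ : ∀ i, Λ →* MulAut (Υ i))
    (hσ : ∀ i, ∀ h : Υ i, h ≠ 1 → ∀ g : Λ, σ i g h = h → g = 1)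
    (τ : Λ →* MulAut (Monoid.CoprodI Υ))
    (hτ : ∀ (g : Λ) (i : Fin m) (h : Υ i),
      τ g (Monoid.CoprodI.of h) = Monoid.CoprodI.of (σ i g h)) :
    ∀ x : Monoid.CoprodI Υ ⋊[τ] Λ, x ≠ 1 →
      {y : Monoid.CoprodI Υ ⋊[τ] Λ | ∃ z, z * x * z⁻¹ = y}.Infinite := by
  intro x hx
  by_cases hw : x.left ≠ 1
  · -- conjugate by (1, k), k ∈ Λ
    refine Set.infinite_of_injective_forall_mem
      (f := fun k : Λ => (⟨1, k⟩ : Monoid.CoprodI Υ ⋊[τ] Λ) * x * (⟨1, k⟩ : _)⁻¹) ?_ ?_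
    · intro k k' h
      have hleft := congrArg SemidirectProduct.left h
      simp only [SemidirectProduct.mul_left, SemidirectProduct.inv_left,
        SemidirectProduct.mul_right, map_one, one_mul] at hleft
      -- hleft : τ k x.left * _ = τ k' x.left * _
      have h2 : τ k x.left = τ k' x.left := by
        have := hleft
        simpa using this
      have : τ (k'⁻¹ * k) x.left = x.left := by
        rw [map_mul, MulAut.mul_apply, h2, ← MulAut.mul_apply, ← map_mul,
          inv_mul_cancel, map_one, MulAut.one_apply]
      have h3 := tau_trivial_stab σ hσ τ hτ (k'⁻¹ * k) x.left hw this
      rwa [inv_mul_eq_one, eq_comm] at h3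
    · intro k; exact ⟨_, rfl⟩
  · -- x.left = 1, so x.right ≠ 1
    push_neg at hw
    have hg : x.right ≠ 1 := by
      intro h
      exact hx (SemidirectProduct.ext hw h)
    have h0 : (0 : ℕ) < m := by omega
    set i0 : Fin m := ⟨0, h0⟩
    refine Set.infinite_of_injective_forall_mem
      (f := fun u : Υ i0 =>
        (⟨Monoid.CoprodI.of u, 1⟩ : Monoid.CoprodI Υ ⋊[τ] Λ) * x *
          (⟨Monoid.CoprodI.of u, 1⟩ : Monoid.CoprodI Υ ⋊[τ] Λ)⁻¹) ?_ ?_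
    · intro u u' h
      have hleft := congrArg SemidirectProduct.left h
      simp only [SemidirectProduct.mul_left, SemidirectProduct.inv_left,
        SemidirectProduct.mul_right, map_one, one_mul, mul_one, hw,
        MulAut.one_apply, inv_one] at hleft
      -- hleft : of u * τ x.right (of u)⁻¹ = of u' * τ x.right (of u')⁻¹
      simp only [hτ, ← map_inv, ← map_mul] at hleft
      have h2' := Monoid.CoprodI.of_injective i0 hleft
      rw [map_inv, map_inv] at h2'
      have := h2'
      by_contra hne
      have hv : u * u'⁻¹ ≠ 1 := by
        intro h1; exact hne (mul_inv_eq_one.1 h1)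
      apply hg
      apply hσ i0 (u * u'⁻¹) hv x.right
      have key : σ i0 x.right u * (σ i0 x.right u')⁻¹ = u * u'⁻¹ := by
        have h2 : u * (σ i0 x.right u)⁻¹ = u' * (σ i0 x.right u')⁻¹ := this
        rw [← div_eq_mul_inv, ← div_eq_mul_inv] at h2 ⊢
        rw [div_eq_div_iff_mul_eq_mul] at h2 ⊢
        rw [mul_comm (σ i0 x.right u) u']
        exact h2.symm
      rw [map_mul, map_inv]
      exact key
    · intro u; exact ⟨_, rfl⟩
end

section
/- Let Λ be a group acting on a group H by τ : Λ → Aut(H) with trivial stabilizers, and let K be any group. Let Λ act on the binary free product H ∗ K by the diagonal action σ, where σ_g restricts to τ_g on (the image of) H and to the identity on (the image of) K. Then for every ξ ∈ H ∗ K: if ξ lies in the canonical image of K, the stabilizer {g ∈ Λ : σ_g(ξ) = ξ} equals all of Λ; and if ξ does not lie in the canonical image of K, the stabilizer {g ∈ Λ : σ_g(ξ) = ξ} equals {1}. -/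
open Monoid

namespace DiagAux

open Monoid.CoprodI

theorem list_map_eq_self {α : Type*} {f : α → α} : ∀ {l : List α}, l.map f = l →
    ∀ x ∈ l, f x = x
  | [], _, x, hx => by cases hx
  | a :: l, h, x, hx => by
    simp only [List.map_cons, List.cons.injEq] at h
    rcases List.mem_cons.1 hx with rfl | hx
    · exact h.1
    · exact list_map_eq_self h.2 x hx

variable {ι : Type*} {M : ι → Type*} [∀ i, Group (M i)]

theorem prod_eq (w : Word M) : Word.prod w = (w.toList.map fun l => of l.2).prod := rfl

/-- Map a reduced word letterwise by maps preserving non-identity. -/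
def mapWord (φ : ∀ i, M i → M i) (hφ : ∀ i (m : M i), m ≠ 1 → φ i m ≠ 1)
    (w : Word M) : Word M where
  toList := w.toList.map fun l => ⟨l.1, φ l.1 l.2⟩
  ne_one := by
    intro l hl
    rcases List.mem_map.1 hl with ⟨l', hl', rfl⟩
    exact hφ _ _ (w.ne_one l' hl')
  chain_ne := (List.isChain_map _).2 w.chain_ne

theorem prod_mapWord (φ : ∀ i, M i → M i) (hφ : ∀ i (m : M i), m ≠ 1 → φ i m ≠ 1)
    (Φ : CoprodI M →* CoprodI M) (hΦ : ∀ i (m : M i), Φ (of m) = of (φ i m))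
    (w : Word M) : Word.prod (mapWord φ hφ w) = Φ (Word.prod w) := by
  unfold mapWord Word.prod
  rw [MonoidHom.map_list_prod, List.map_map, List.map_map]
  exact congrArg List.prod (List.map_congr_left fun l _ => (hΦ l.1 l.2).symm)

theorem fixed_letters [DecidableEq ι] [∀ i, DecidableEq (M i)]
    (φ : ∀ i, M i → M i) (hφ : ∀ i (m : M i), m ≠ 1 → φ i m ≠ 1)
    (Φ : CoprodI M →* CoprodI M) (hΦ : ∀ i (m : M i), Φ (of m) = of (φ i m))
    {x : CoprodI M} (hx : Φ x = x) :
    ∃ w : Word M, Word.prod w = x ∧ ∀ l ∈ w.toList, φ l.1 l.2 = l.2 := by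
  have hpx : Word.prod (Word.equiv x) = x := (Word.equiv).symm_apply_apply x
  refine ⟨Word.equiv x, hpx, ?_⟩
  have h1 : Word.prod (mapWord φ hφ (Word.equiv x)) = Word.prod (Word.equiv x) := by
    rw [prod_mapWord φ hφ Φ hΦ, hpx, hx]
  have h2 : mapWord φ hφ (Word.equiv x) = Word.equiv x :=
    (Word.equiv (M := M)).symm.injective h1
  have h3 : ((Word.equiv x).toList.map fun l => (⟨l.1, φ l.1 l.2⟩ : Σ i, M i))
      = (Word.equiv x).toList := congrArg Word.toList h2
  intro l hl
  have hfst : (⟨l.1, φ l.1 l.2⟩ : Σ i, M i) = ⟨l.1, l.2⟩ := list_map_eq_self h3 l hl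
  exact eq_of_heq (Sigma.mk.inj_iff.mp hfst).2

universe u v

/-- The two-element family of groups corresponding to a binary coproduct. -/
def Fam (H : Type u) (K : Type v) : Bool → Type (max u v) :=
  fun b => Bool.rec (ULift.{u} K) (ULift.{v} H) b

instance famGroup (H : Type u) (K : Type v) [Group H] [Group K] :
    ∀ b, Group (Fam H K b)
  | true => inferInstanceAs (Group (ULift H))
  | false => inferInstanceAs (Group (ULift K))

variable (H : Type u) (K : Type v) [Group H] [Group K]

/-- From the binary coproduct to the indexed coproduct. -/
def toI : Coprod H K →* CoprodI (Fam H K) :=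
  Coprod.lift
    ((of (i := true)).comp (MulEquiv.ulift.symm : H ≃* ULift H).toMonoidHom)
    ((of (i := false)).comp (MulEquiv.ulift.symm : K ≃* ULift K).toMonoidHom)

/-- From the indexed coproduct to the binary coproduct. -/
def ofI : CoprodI (Fam H K) →* Coprod H K :=
  CoprodI.lift fun b => match b with
    | true => (Coprod.inl : H →* Coprod H K).comp
        (MulEquiv.ulift : ULift H ≃* H).toMonoidHom
    | false => (Coprod.inr : K →* Coprod H K).comp
        (MulEquiv.ulift : ULift K ≃* K).toMonoidHom

@[simp] theorem toI_inl (h : H) : toI H K (Coprod.inl h) = of (i := true) (ULift.up h) := by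
  simp only [toI, Coprod.lift_apply_inl, MonoidHom.coe_comp, Function.comp_apply]; rfl

@[simp] theorem toI_inr (k : K) : toI H K (Coprod.inr k) = of (i := false) (ULift.up k) := by
  simp only [toI, Coprod.lift_apply_inr, MonoidHom.coe_comp, Function.comp_apply]; rfl

@[simp] theorem ofI_of_true (h : ULift.{v} H) :
    ofI H K (of (i := true) h) = Coprod.inl h.down := by
  simp only [ofI, CoprodI.lift_of]; rfl

@[simp] theorem ofI_of_false (k : ULift.{u} K) :
    ofI H K (of (i := false) k) = Coprod.inr k.down := by
  simp only [ofI, CoprodI.lift_of]; rfl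

theorem ofI_toI (x : Coprod H K) : ofI H K (toI H K x) = x := by
  have : (ofI H K).comp (toI H K) = MonoidHom.id _ := by
    apply Coprod.hom_ext <;> ext x <;> simp
  exact DFunLike.congr_fun this x

theorem toI_ofI (x : CoprodI (Fam H K)) : toI H K (ofI H K x) = x := by
  have : (toI H K).comp (ofI H K) = MonoidHom.id _ := by
    apply CoprodI.ext_hom
    intro b
    cases b <;> ext x <;> simp <;> rfl
  exact DFunLike.congr_fun this x

end DiagAux

/-- For the diagonal action `σ` of `Λ` on the binary free product `H ∗ K` (acting by `τ` on
the image of `H` and trivially on the image of `K`), where `τ` has trivial stabilizers: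
the stabilizer of `ξ` is all of `Λ` if `ξ` lies in the canonical image of `K`, and
is `{1}` otherwise. -/
theorem diagonal_action_coprod_stabilizers
    {Λ H K : Type*} [Group Λ] [Group H] [Group K]
    (τ : Λ →* MulAut H)
    (hτ : ∀ h : H, h ≠ 1 → ∀ g : Λ, τ g h = h → g = 1)
    (σ : Λ →* MulAut (Coprod H K))
    (hσl : ∀ (g : Λ) (h : H), σ g (Coprod.inl h) = Coprod.inl (τ g h))
    (hσr : ∀ (g : Λ) (k : K), σ g (Coprod.inr k) = Coprod.inr k) :
    ∀ ξ : Coprod H K,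
      (ξ ∈ Set.range (Coprod.inr : K →* Coprod H K) →
        {g : Λ | σ g ξ = ξ} = Set.univ) ∧
      (ξ ∉ Set.range (Coprod.inr : K →* Coprod H K) →
        {g : Λ | σ g ξ = ξ} = {1}) := by
  classical
  intro ξ
  constructor
  · rintro ⟨k, rfl⟩
    ext g
    simp only [Set.mem_setOf_eq, Set.mem_univ, iff_true]
    exact hσr g k
  · intro hξ
    ext g
    simp only [Set.mem_setOf_eq, Set.mem_singleton_iff]
    constructor
    · intro hg
      by_contra hg1
      apply hξ
      set e := DiagAux.toI H K with he
      set e' := DiagAux.ofI H K with he'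
      set Φ : CoprodI (DiagAux.Fam H K) →* CoprodI (DiagAux.Fam H K) :=
        e.comp ((σ g).toMonoidHom.comp e') with hΦdef
      let φ : ∀ b, DiagAux.Fam H K b → DiagAux.Fam H K b := fun b =>
        match b with
        | true => fun x => ULift.up (τ g x.down)
        | false => id
      have hφ : ∀ b (m : DiagAux.Fam H K b), m ≠ 1 → φ b m ≠ 1 := by
        intro b m hm
        cases b
        · exact hm
        · intro hcon
          apply hm
          have h1 : τ g m.down = 1 := congrArg ULift.down hcon
          have h2 : m.down = 1 := (MulEquiv.map_eq_one_iff (τ g)).1 h1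
          exact ULift.ext m 1 h2
      have hΦ : ∀ b (m : DiagAux.Fam H K b), Φ (Monoid.CoprodI.of m) = Monoid.CoprodI.of (φ b m) := by
        intro b m
        cases b
        · show e ((σ g) (e' (Monoid.CoprodI.of (i := false) m))) = _
          rw [he']; erw [DiagAux.ofI_of_false H K m]; rw [hσr, he, DiagAux.toI_inr]
          rfl
        · show e ((σ g) (e' (Monoid.CoprodI.of (i := true) m))) = _
          rw [he']; erw [DiagAux.ofI_of_true H K m]; rw [hσl, he, DiagAux.toI_inl]
      have hΦx : Φ (e ξ) = e ξ := by
        show e ((σ g) (e' (e ξ))) = e ξ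
        rw [he', he, DiagAux.ofI_toI, hg]
      obtain ⟨w, hw, hlet⟩ := DiagAux.fixed_letters φ hφ Φ hΦ hΦx
      have hfalse : ∀ l ∈ w.toList, l.1 = false := by
        rintro ⟨b, m⟩ hl
        cases b
        · rfl
        · exfalso
          apply hg1
          have hmfix : φ true m = m := hlet ⟨true, m⟩ hl
          have h1 : τ g m.down = m.down := congrArg ULift.down hmfix
          have hm1 : m ≠ 1 := w.ne_one ⟨true, m⟩ hl
          have hmd : m.down ≠ 1 := fun h => hm1 (ULift.ext m 1 h)
          exact hτ m.down hmd g h1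
      rw [DiagAux.prod_eq] at hw
      rcases hlist : w.toList with _ | ⟨⟨b1, m1⟩, rest⟩
      · rw [hlist] at hw
        simp only [List.map_nil, List.prod_nil] at hw
        have hξ1 : ξ = 1 := by
          rw [← DiagAux.ofI_toI H K ξ, ← he, ← hw, map_one]
        exact ⟨1, by rw [map_one, hξ1]⟩
      · have hb1 : b1 = false := hfalse ⟨b1, m1⟩ (hlist ▸ List.mem_cons_self)
        subst hb1
        rcases rest with _ | ⟨⟨b2, m2⟩, rest'⟩
        · rw [hlist] at hw
          simp only [List.map_cons, List.map_nil, List.prod_cons, List.prod_nil, mul_one] at hw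
          refine ⟨m1.down, ?_⟩
          have : ξ = e' (Monoid.CoprodI.of (i := false) m1) := by
            rw [← DiagAux.ofI_toI H K ξ, ← he', ← he, ← hw]
          rw [this, he']; erw [DiagAux.ofI_of_false H K m1]
        · exfalso
          have hb2 : b2 = false := hfalse ⟨b2, m2⟩
            (hlist ▸ List.mem_cons_of_mem _ List.mem_cons_self)
          have hchain := w.chain_ne
          rw [hlist] at hchain
          exact (List.isChain_cons_cons.1 hchain).1 hb2.symm
    · rintro rfl
      simp
end

section
/- Let G₁ and G₂ be groups, let v ∈ G₁ with v ≠ 1 and w ∈ G₂ with w ≠ 1, and set u = vw ∈ G₁ ∗ G₂ (product of the canonical images). Then for all a, b ∈ G₁ ∗ G₂ there exists N such that for every n ≥ N, the element a uⁿ b lies neither in the canonical image of G₁ nor in the canonical image of G₂. -/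
open Monoid

universe u₁ u₂

section Aux

open Monoid.CoprodI

variable {ι : Type*} [DecidableEq ι] {M : ι → Type*} [∀ i, Group (M i)]
  [∀ i, DecidableEq (M i)]

private lemma aux_rcons_length {i : ι} (p : Word.Pair M i) :
    (Word.rcons p).toList.length =
      p.tail.toList.length + (if p.head = 1 then 0 else 1) := by
  rw [Word.rcons]
  split <;> simp [Word.cons]

private lemma aux_length_of_smul {i : ι} (m : M i) (w : Word M) :
    (of m • w).toList.length ≤ w.toList.length + 1 ∧
      w.toList.length ≤ (of m • w).toList.length + 1 := by
  have hw : Word.rcons (Word.equivPair i w) = w := by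
    rw [← Word.equivPair_symm]
    exact (Word.equivPair i).symm_apply_apply w
  have h1 : w.toList.length = (Word.equivPair i w).tail.toList.length +
      (if (Word.equivPair i w).head = 1 then 0 else 1) := by
    conv_lhs => rw [← hw]
    exact aux_rcons_length _
  have h2 : (of m • w).toList.length = (Word.equivPair i w).tail.toList.length +
      (if m * (Word.equivPair i w).head = 1 then 0 else 1) := by
    rw [Word.of_smul_def, aux_rcons_length]
  split_ifs at h1 h2 <;> omega

private lemma aux_exists_bound (x : CoprodI M) : ∃ k : ℕ, ∀ w : Word M,
    (x • w).toList.length ≤ w.toList.length + k ∧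
      w.toList.length ≤ (x • w).toList.length + k := by
  induction x using CoprodI.induction_on with
  | one => exact ⟨0, fun w => by simp⟩
  | of i m => exact ⟨1, fun w => aux_length_of_smul m w⟩
  | mul x y hx hy =>
    obtain ⟨kx, hx⟩ := hx
    obtain ⟨ky, hy⟩ := hy
    refine ⟨kx + ky, fun w => ?_⟩
    have h1 := hx (y • w)
    have h2 := hy w
    rw [mul_smul]
    omega

private lemma aux_growth {i j : ι} (hij : i ≠ j) {v : M i} (hv : v ≠ 1) {w : M j}
    (hw : w ≠ 1) :
    ∀ (n : ℕ) (ww : Word M), ww.fstIdx ≠ some j →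
      ((of v * of w) ^ n • ww).toList.length = ww.toList.length + 2 * n ∧
        ((of v * of w) ^ n • ww).fstIdx ≠ some j := by
  intro n
  induction n with
  | zero => intro ww h; simpa using h
  | succ n ih =>
    intro ww h
    obtain ⟨hlen, hfst⟩ := ih ww h
    have key : (of v * of w) ^ (n + 1) • ww
        = of v • (of w • ((of v * of w) ^ n • ww)) := by
      rw [pow_succ', mul_smul, mul_smul]
    have h1 : of w • ((of v * of w) ^ n • ww)
        = Word.cons w ((of v * of w) ^ n • ww) hfst hw :=
      Word.cons_eq_smul.symm
    have hfst1 : (of w • ((of v * of w) ^ n • ww)).fstIdx ≠ some i := by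
      rw [h1, Word.fstIdx_cons]
      simp [Ne.symm hij]
    have h2 : of v • (of w • ((of v * of w) ^ n • ww))
        = Word.cons v (of w • ((of v * of w) ^ n • ww)) hfst1 hv :=
      Word.cons_eq_smul.symm
    rw [key, h2]
    constructor
    · rw [Word.cons_toList, h1, Word.cons_toList]
      simp only [List.length_cons]
      omega
    · rw [Word.fstIdx_cons]
      simp [hij]

private lemma aux_coprodI_main {i j : ι} (hij : i ≠ j) {v : M i} (hv : v ≠ 1)
    {w : M j} (hw : w ≠ 1) (a b : CoprodI M) :
    ∃ N : ℕ, ∀ n, N ≤ n → ∀ (k : ι) (g : M k), a * (of v * of w) ^ n * b ≠ of g := by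
  classical
  obtain ⟨ka, hka⟩ := aux_exists_bound (M := M) a⁻¹
  obtain ⟨kb, hkb⟩ := aux_exists_bound (M := M) b⁻¹
  refine ⟨ka + kb + 2, fun n hn k g hgeq => ?_⟩
  have hu : (of v * of w) ^ n = a⁻¹ * (of g * b⁻¹) := by
    rw [← hgeq]; group
  have hempty : (Word.empty : Word M).fstIdx ≠ some j := by
    simp [Word.fstIdx, Word.empty]
  have hlen := (aux_growth hij hv hw n Word.empty hempty).1
  rw [hu, mul_smul, mul_smul] at hlen
  have h1 := (hka (of g • (b⁻¹ • (Word.empty : Word M)))).1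
  have h2 := (aux_length_of_smul g (b⁻¹ • (Word.empty : Word M))).1
  have h3 := (hkb (Word.empty : Word M)).1
  have h0 : (Word.empty : Word M).toList.length = 0 := rfl
  omega

end Aux

private lemma aux_final {G₁ : Type u₁} {G₂ : Type u₂} [Group G₁] [Group G₂]
    (v : G₁) (hv : v ≠ 1) (w : G₂) (hw : w ≠ 1)
    (a b : Coprod G₁ G₂) :
    ∃ N : ℕ, ∀ n : ℕ, N ≤ n →
      a * (Coprod.inl v * Coprod.inr w) ^ n * b ∉
          Set.range (Coprod.inl : G₁ →* Coprod G₁ G₂) ∧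
      a * (Coprod.inl v * Coprod.inr w) ^ n * b ∉
          Set.range (Coprod.inr : G₂ →* Coprod G₁ G₂) := by
  classical
  let M : Bool → Type _ := fun b => cond b (ULift.{u₂} G₁) (ULift.{u₁} G₂)
  letI instM : ∀ b, Group (M b) := fun b =>
    Bool.rec (inferInstance : Group (ULift.{u₁} G₂)) (inferInstance : Group (ULift.{u₂} G₁)) b
  let e₁ : G₁ →* M true := (MulEquiv.ulift (α := G₁)).symm.toMonoidHom
  let e₂ : G₂ →* M false := (MulEquiv.ulift (α := G₂)).symm.toMonoidHom
  let φ : Coprod G₁ G₂ →* CoprodI M :=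
    Coprod.lift ((CoprodI.of (M := M) (i := true)).comp e₁)
      ((CoprodI.of (M := M) (i := false)).comp e₂)
  have hv' : e₁ v ≠ 1 := fun h => hv (congrArg ULift.down h)
  have hw' : e₂ w ≠ 1 := fun h => hw (congrArg ULift.down h)
  letI instD : ∀ b, DecidableEq (M b) := fun _ => Classical.decEq _
  obtain ⟨N, hN⟩ := aux_coprodI_main (M := M) (i := true) (j := false)
    (by simp) hv' hw' (φ a) (φ b)
  refine ⟨N, fun n hn => ⟨?_, ?_⟩⟩
  · rintro ⟨g, hg⟩
    refine hN n hn true (e₁ g) ?_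
    have h := congrArg φ hg.symm
    simp only [map_mul, map_pow] at h
    exact h
  · rintro ⟨g, hg⟩
    refine hN n hn false (e₂ g) ?_
    have h := congrArg φ hg.symm
    simp only [map_mul, map_pow] at h
    exact h

/-- For `v ≠ 1` in `G₁`, `w ≠ 1` in `G₂` and `u = vw ∈ G₁ ∗ G₂`, for all
`a, b ∈ G₁ ∗ G₂` there is `N` such that for every `n ≥ N` the element `a * uⁿ * b` lies
neither in the canonical image of `G₁` nor in that of `G₂`. -/
theorem coprod_eventually_not_in_factors
    {G₁ G₂ : Type*} [Group G₁] [Group G₂]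
    (v : G₁) (hv : v ≠ 1) (w : G₂) (hw : w ≠ 1)
    (a b : Coprod G₁ G₂) :
    ∃ N : ℕ, ∀ n : ℕ, N ≤ n →
      a * (Coprod.inl v * Coprod.inr w) ^ n * b ∉
          Set.range (Coprod.inl : G₁ →* Coprod G₁ G₂) ∧
      a * (Coprod.inl v * Coprod.inr w) ^ n * b ∉
          Set.range (Coprod.inr : G₂ →* Coprod G₁ G₂) :=
  aux_final v hv w hw a b
end

section
/- Let H̃ be a complex Hilbert space, K ⊆ H̃ a closed subspace, and P : H̃ → H̃ the orthogonal projection onto K. Let β and u be unitary operators on H̃ such that β(ξ) = ξ for all ξ ∈ K and β ∘ u ∘ β = u⁻¹. Then for every x ∈ K, ‖x − u²(x)‖ ≤ 2 ‖u(x) − P(u(x))‖. -/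
/-- Popa's transversality inequality, abstract Hilbert-space form: if `K` is a closed
subspace of a complex Hilbert space `H̃`, `P` is the orthogonal projection onto `K`
(characterized by `P x ∈ K` and `x - P x ⊥ K`), and `β`, `u` are unitaries on `H̃` with
`β` fixing `K` pointwise and `β ∘ u ∘ β = u⁻¹`, then for every `x ∈ K` one has
`‖x - u²x‖ ≤ 2 ‖u x - P (u x)‖`. -/
theorem popa_transversality
    {H : Type*} [NormedAddCommGroup H] [InnerProductSpace ℂ H] [CompleteSpace H]
    (K : Submodule ℂ H) (hK : IsClosed (K : Set H))
    (P : H →L[ℂ] H) (hPmem : ∀ x : H, P x ∈ K) (hPortho : ∀ x : H, x - P x ∈ Kᗮ)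
    (β u : H ≃ₗᵢ[ℂ] H)
    (hβ : ∀ ξ ∈ K, β ξ = ξ)
    (hmal : ∀ ξ : H, β (u (β ξ)) = u.symm ξ) :
    ∀ x ∈ K, ‖x - u (u x)‖ ≤ 2 * ‖u x - P (u x)‖ := by
  intro x hx
  have h1 : ‖x - u (u x)‖ = ‖β (u x) - u x‖ := by
    have : u.symm (x - u (u x)) = β (u x) - u x := by
      rw [map_sub]
      rw [← hmal x, hβ x hx, u.symm_apply_apply]
    rw [← u.symm.norm_map (x - u (u x)), this]
  have h2 : β (u x) - u x = β (u x - P (u x)) - (u x - P (u x)) := by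
    have hβP : β (P (u x)) = P (u x) := hβ _ (hPmem _)
    rw [map_sub, hβP]
    abel
  rw [h1, h2]
  calc ‖β (u x - P (u x)) - (u x - P (u x))‖
      ≤ ‖β (u x - P (u x))‖ + ‖u x - P (u x)‖ := norm_sub_le _ _
    _ = 2 * ‖u x - P (u x)‖ := by rw [β.norm_map]; ring
end

section
/- Let Λ be an infinite group acting on an infinite abelian group Υ via σ : Λ → Aut(Υ) with trivial stabilizers. Then the semidirect product Υ ⋊_σ Λ is ICC: for every element g ≠ 1 of Υ ⋊_σ Λ, the conjugacy class {x g x⁻¹} is infinite. -/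
private lemma icc_aux {G : Type*} [CommGroup G] {a b c d e : G}
    (h : a * e * c = b * e * d) : a * c = b * d := by
  have h2 : (a * c) * e = (b * d) * e := by
    rw [mul_right_comm a c e, mul_right_comm b d e, mul_right_comm a e c] at *
    exact h
  exact mul_right_cancel h2

/-- If an infinite group `Λ` acts on an infinite abelian group `Υ` with trivial
stabilizers, then the semidirect product `Υ ⋊[σ] Λ` is ICC: every nontrivial element has
an infinite conjugacy class. -/
theorem semidirect_infinite_abelian_icc
    {Λ Υ : Type*} [Group Λ] [Infinite Λ] [CommGroup Υ] [Infinite Υ]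
    (σ : Λ →* MulAut Υ)
    (hσ : ∀ h : Υ, h ≠ 1 → ∀ g : Λ, σ g h = h → g = 1) :
    ∀ x : Υ ⋊[σ] Λ, x ≠ 1 →
      {y : Υ ⋊[σ] Λ | ∃ z, z * x * z⁻¹ = y}.Infinite := by
  intro x hx
  by_cases hg : x.right = 1
  · -- x = (h, 1) with h ≠ 1; conjugate by inr t
    have hh : x.left ≠ 1 := by
      intro h1
      exact hx (by ext <;> simp [h1, hg])
    refine Set.infinite_of_injective_forall_mem
      (f := fun t : Λ => SemidirectProduct.inr (φ := σ) t * x * (SemidirectProduct.inr t)⁻¹)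
      ?_ ?_
    · intro s t hst
      have hl := congrArg SemidirectProduct.left hst
      simp only [← map_inv, SemidirectProduct.mul_left, SemidirectProduct.left_inr,
        SemidirectProduct.mul_right, SemidirectProduct.right_inr, map_one, map_mul,
        one_mul, mul_one, MulAut.one_apply] at hl
      have hst' : σ s x.left = σ t x.left := by simpa using hl
      have key : σ (t⁻¹ * s) x.left = x.left := by
        rw [map_mul, MulAut.mul_apply, hst', ← MulAut.mul_apply, ← map_mul,
          inv_mul_cancel, map_one, MulAut.one_apply]
      have h1 : t⁻¹ * s = 1 := hσ x.left hh _ key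
      have := inv_mul_eq_one.mp h1
      exact this.symm
    · exact fun t => ⟨SemidirectProduct.inr t, rfl⟩
  · -- x.right ≠ 1; conjugate by inl k
    refine Set.infinite_of_injective_forall_mem
      (f := fun k : Υ => SemidirectProduct.inl (φ := σ) k * x * (SemidirectProduct.inl k)⁻¹)
      ?_ ?_
    · intro k k' hkk
      have hl := congrArg SemidirectProduct.left hkk
      simp only [← map_inv, SemidirectProduct.mul_left, SemidirectProduct.left_inl,
        SemidirectProduct.right_inl, SemidirectProduct.mul_right, map_one, mul_one, one_mul,
        MulAut.one_apply] at hl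
      -- hl : k * x.left * σ x.right k⁻¹ = k' * x.left * σ x.right k'⁻¹
      have h' : k * σ x.right k⁻¹ = k' * σ x.right k'⁻¹ := by
        exact icc_aux hl
      by_contra hne
      have hd : k'⁻¹ * k ≠ 1 := fun h => hne ((inv_mul_eq_one.mp h).symm)
      have key : σ x.right (k'⁻¹ * k) = k'⁻¹ * k := by
        calc σ x.right (k'⁻¹ * k) = σ x.right k'⁻¹ * σ x.right k := by rw [map_mul]
          _ = k'⁻¹ * (k' * σ x.right k'⁻¹) * σ x.right k := by group
          _ = k'⁻¹ * (k * σ x.right k⁻¹) * σ x.right k := by rw [h']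
          _ = k'⁻¹ * k := by simp [map_inv, mul_assoc]
      exact hg (hσ _ hd _ key)
    · exact fun k => ⟨SemidirectProduct.inl k, rfl⟩
end
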